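/- Assume the primal-dual pair {(P),(D)} (with data c ∈ X*, b ∈ Y*) is consistent, and let v be the value of the game G = (α,β,A) for some α ∈ int C*, β ∈ int K*. If v ≠ 0, then at least one of (P), (D) is strictly feasible; in fact val(P) = val(D), and at least one of the sets of optimal solutions S(P), S(D) is nonempty, convex, and bounded. -/

import Mathlib

open NormedSpace

section helpers
variable {F : Type*} [NormedAddCommGroup F] [NormedSpace ℝ F]

lemma mem_interior_of_ball {Q : Set F} {z : F →L[ℝ] ℝ} {ε : ℝ} (hε : 0 < ε)
    (h : ∀ y ∈ Q, ε * ‖y‖ ≤ z y) :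
    z ∈ interior {w : F →L[ℝ] ℝ | ∀ y ∈ Q, 0 ≤ w y} := by
  rw [mem_interior]
  refine ⟨Metric.ball z ε, ?_, Metric.isOpen_ball, Metric.mem_ball_self hε⟩
  intro w hw y hy
  have h1 : ε * ‖y‖ ≤ z y := h y hy
  have h2 : |(w - z) y| ≤ ‖w - z‖ * ‖y‖ := (w - z).le_opNorm y
  have h3 : ‖w - z‖ < ε := by rw [← dist_eq_norm]; exact Metric.mem_ball.1 hw
  have h4 : (w - z) y = w y - z y := rfl
  rw [h4] at h2
  have h5 : ‖w - z‖ * ‖y‖ ≤ ε * ‖y‖ :=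
    mul_le_mul_of_nonneg_right h3.le (norm_nonneg y)
  have := abs_le.1 h2
  linarith [this.1]

lemma interior_dual_bound {Q : Set F} {z : F →L[ℝ] ℝ}
    (h : z ∈ interior {w : F →L[ℝ] ℝ | ∀ y ∈ Q, 0 ≤ w y}) :
    ∃ ε > 0, ∀ y ∈ Q, ε * ‖y‖ ≤ z y := by
  rw [mem_interior] at h
  obtain ⟨t, hts, hto, hzt⟩ := h
  obtain ⟨ε, hε, hball⟩ := Metric.isOpen_iff.1 hto z hzt
  refine ⟨ε / 2, by linarith, fun y hy => ?_⟩
  rcases eq_or_ne y 0 with rfl | hy0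
  · simp
  obtain ⟨g, hg1, hgy⟩ := exists_dual_vector ℝ y (norm_ne_zero_iff.mpr hy0)
  have hgy' : g y = ‖y‖ := by exact_mod_cast hgy
  have hmem : z - (ε / 2) • g ∈ Metric.ball z ε := by
    rw [Metric.mem_ball, dist_eq_norm]
    have : z - (ε / 2) • g - z = -((ε / 2) • g) := by abel
    rw [this, norm_neg, norm_smul (ε/2) g, hg1, mul_one, Real.norm_eq_abs,
      abs_of_pos (by linarith : (0:ℝ) < ε/2)]
    linarith
  have h0 : 0 ≤ (z - (ε / 2) • g) y := hts (hball hmem) y hy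
  rw [ContinuousLinearMap.sub_apply, ContinuousLinearMap.smul_apply, hgy'] at h0
  simp only [smul_eq_mul] at h0
  linarith

end helpers


section core
variable {E F : Type*} [NormedAddCommGroup E] [NormedSpace ℝ E]
  [NormedAddCommGroup F] [NormedSpace ℝ F]

set_option maxHeartbeats 1000000 in
lemma core_duality
    (hFrefl : Function.Surjective (NormedSpace.inclusionInDoubleDual ℝ F))
    (B : E →L[ℝ] F →L[ℝ] ℝ)
    (P : Set E) (Q : Set F)
    (hPcone : ∀ r : ℝ, 0 ≤ r → ∀ x ∈ P, r • x ∈ P) (hPconv : Convex ℝ P)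
    (hQcone : ∀ r : ℝ, 0 ≤ r → ∀ y ∈ Q, r • y ∈ Q) (hQconv : Convex ℝ Q)
    (hQclosed : IsClosed Q)
    (c : E →L[ℝ] ℝ) (b : F →L[ℝ] ℝ)
    (FP : Set E) (hFP : FP = {x ∈ P | ∀ y ∈ Q, b y ≤ B x y})
    (FD : Set F) (hFD : FD = {y ∈ Q | ∀ x ∈ P, B x y ≤ c x})
    (hFDne : FD.Nonempty)
    (xb : E) (ε : ℝ) (hxbP : xb ∈ P) (hε : 0 < ε)
    (hstrict : ∀ y ∈ Q, b y + ε * ‖y‖ ≤ B xb y)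
    (vP vD : ℝ) (hvP : vP = sInf (c '' FP)) (hvD : vD = sSup (b '' FD))
    (Sol : Set F) (hSol : Sol = {y ∈ FD | b y = vD}) :
    vP = vD ∧ Sol.Nonempty ∧ Convex ℝ Sol ∧ Bornology.IsBounded Sol := by
  obtain ⟨y₀, hy₀⟩ := hFDne
  have h0P : (0:E) ∈ P := by simpa using hPcone 0 le_rfl xb hxbP
  have hy₀Q : y₀ ∈ Q := by rw [hFD] at hy₀; exact hy₀.1
  have hy₀le : ∀ x ∈ P, B x y₀ ≤ c x := by rw [hFD] at hy₀; exact hy₀.2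
  have h0Q : (0:F) ∈ Q := by simpa using hQcone 0 le_rfl y₀ hy₀Q
  have hxbFP : xb ∈ FP := by
    rw [hFP]
    refine ⟨hxbP, fun y hy => le_trans ?_ (hstrict y hy)⟩
    have : 0 ≤ ε * ‖y‖ := by positivity
    linarith
  have hFPne : FP.Nonempty := ⟨xb, hxbFP⟩
  have hweak : ∀ x ∈ FP, ∀ y ∈ FD, b y ≤ c x := by
    rw [hFP, hFD]; rintro x ⟨hxP, hx⟩ y ⟨hyQ, hy⟩
    exact (hx y hyQ).trans (hy x hxP)
  have hbdB : BddBelow (c '' FP) :=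
    ⟨b y₀, by rintro _ ⟨x, hx, rfl⟩; exact hweak x hx y₀ (by rw [hFD]; exact ⟨hy₀Q, hy₀le⟩)⟩
  have hbdA : BddAbove (b '' FD) :=
    ⟨c xb, by rintro _ ⟨y, hy, rfl⟩; exact hweak xb hxbFP y hy⟩
  have hFDne' : FD.Nonempty := ⟨y₀, by rw [hFD]; exact ⟨hy₀Q, hy₀le⟩⟩
  have hDleP : vD ≤ vP := by
    rw [hvD]
    apply csSup_le (hFDne'.image _)
    rintro _ ⟨y, hy, rfl⟩
    rw [hvP]
    apply le_csInf (hFPne.image _)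
    rintro _ ⟨x, hx, rfl⟩
    exact hweak x hx y hy
  have hvPle : vP ≤ c xb := hvP ▸ csInf_le hbdB ⟨xb, hxbFP, rfl⟩
  set Qs : Set (F →L[ℝ] ℝ) := {w | ∀ y ∈ Q, 0 ≤ w y} with hQs
  have hQsadd : ∀ w1 ∈ Qs, ∀ w2 ∈ Qs, w1 + w2 ∈ Qs := by
    intro w1 h1 w2 h2 y hy
    have := h1 y hy; have := h2 y hy
    simp only [ContinuousLinearMap.add_apply]
    linarith
  have hQssmul : ∀ r : ℝ, 0 ≤ r → ∀ w ∈ Qs, r • w ∈ Qs := by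
    intro r hr w hw y hy
    have := hw y hy
    simp only [ContinuousLinearMap.smul_apply, smul_eq_mul]
    positivity
  have hQsconv : Convex ℝ Qs := by
    intro w1 h1 w2 h2 s t hs ht hst
    exact hQsadd _ (hQssmul s hs w1 h1) _ (hQssmul t ht w2 h2)
  set z0 : F →L[ℝ] ℝ := B xb - b with hz0def
  have hz0 : ∀ y ∈ Q, ε * ‖y‖ ≤ z0 y := by
    intro y hy
    have := hstrict y hy
    have h4 : z0 y = B xb y - b y := rfl
    linarith [h4]
  have hz0ball : ∀ w : F →L[ℝ] ℝ, ‖w - z0‖ < ε → w ∈ Qs := by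
    intro w hw y hy
    have h1 := hz0 y hy
    have h2 : |(w - z0) y| ≤ ‖w - z0‖ * ‖y‖ := (w - z0).le_opNorm y
    have h4 : (w - z0) y = w y - z0 y := rfl
    rw [h4] at h2
    have h5 : ‖w - z0‖ * ‖y‖ ≤ ε * ‖y‖ :=
      mul_le_mul_of_nonneg_right hw.le (norm_nonneg y)
    have := abs_le.1 h2
    linarith [this.1]
  have hmemint : ∀ w : F →L[ℝ] ℝ, (∃ δ > 0, ∀ w', ‖w' - w‖ < δ → w' ∈ Qs) →
      w ∈ interior Qs := by
    rintro w ⟨δ, hδ, hb⟩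
    rw [mem_interior]
    exact ⟨Metric.ball w δ, fun w' hw' =>
      hb w' (by rwa [Metric.mem_ball, dist_eq_norm] at hw'), Metric.isOpen_ball,
      Metric.mem_ball_self hδ⟩
  have hz0int : z0 ∈ interior Qs := hmemint z0 ⟨ε, hε, fun w' h => hz0ball w' h⟩
  have hint1 : ∀ s : ℝ, 0 < s → s • z0 ∈ interior Qs := by
    intro s hs
    apply hmemint
    refine ⟨s * ε, by positivity, fun w' hw' => ?_⟩
    have hmem : s⁻¹ • w' ∈ Qs := by
      apply hz0ball
      have he : s⁻¹ • w' - z0 = s⁻¹ • (w' - s • z0) := by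
        rw [smul_sub, smul_smul, inv_mul_cancel₀ hs.ne', one_smul]
      rw [he, norm_smul s⁻¹ (w' - s • z0), Real.norm_eq_abs, abs_of_pos (by positivity)]
      calc s⁻¹ * ‖w' - s • z0‖ < s⁻¹ * (s * ε) :=
            mul_lt_mul_of_pos_left hw' (by positivity)
        _ = ε := by field_simp
    have := hQssmul s hs.le _ hmem
    rwa [smul_smul, mul_inv_cancel₀ hs.ne', one_smul] at this
  have hint2 : ∀ z ∈ Qs, ∀ r : ℝ, 0 ≤ r → z0 + r • z ∈ interior Qs := by
    intro z hz r hr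
    apply hmemint
    refine ⟨ε, hε, fun w' hw' => ?_⟩
    have h1 : w' - r • z ∈ Qs := by
      apply hz0ball
      rw [show w' - r • z - z0 = w' - (z0 + r • z) by abel]
      exact hw'
    have := hQsadd _ h1 _ (hQssmul r hr z hz)
    rwa [sub_add_cancel] at this
  -- separation
  set SA : Set ((F →L[ℝ] ℝ) × ℝ) := (fun x => (B x - b, c x - vP)) '' P with hSA
  set SB : Set ((F →L[ℝ] ℝ) × ℝ) := (interior Qs) ×ˢ (Set.Iio (0:ℝ)) with hSB
  have hSAconv : Convex ℝ SA := by
    rintro _ ⟨x1, hx1, rfl⟩ _ ⟨x2, hx2, rfl⟩ s t hs ht hst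
    refine ⟨s • x1 + t • x2, hPconv hx1 hx2 hs ht hst, ?_⟩
    have e1 : B (s • x1 + t • x2) - b = s • (B x1 - b) + t • (B x2 - b) := by
      ext y
      simp only [ContinuousLinearMap.sub_apply, ContinuousLinearMap.add_apply,
        ContinuousLinearMap.smul_apply, map_add, map_smul, smul_eq_mul]
      linear_combination (b y) * hst
    have e2 : c (s • x1 + t • x2) - vP = s * (c x1 - vP) + t * (c x2 - vP) := by
      simp only [map_add, map_smul, smul_eq_mul]
      linear_combination vP * hst
    show (B (s • x1 + t • x2) - b, c (s • x1 + t • x2) - vP) = _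
    rw [Prod.smul_mk, Prod.smul_mk, Prod.mk_add_mk]
    exact Prod.ext e1 (by simpa [smul_eq_mul] using e2)
  have hSBconv : Convex ℝ SB := (hQsconv.interior).prod (convex_Iio 0)
  have hSBopen : IsOpen SB := isOpen_interior.prod isOpen_Iio
  have hdisj : Disjoint SB SA := by
    rw [Set.disjoint_left]
    rintro ⟨z, t⟩ hzt ⟨x, hxP, hxeq⟩
    obtain ⟨hz, ht⟩ := hzt
    simp only [Prod.mk.injEq] at hxeq
    obtain ⟨hxeq1, hxeq2⟩ := hxeq
    have hxFP : x ∈ FP := by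
      rw [hFP]
      refine ⟨hxP, fun y hy => ?_⟩
      have : B x - b ∈ Qs := interior_subset (hxeq1 ▸ hz)
      have h4 : (B x - b) y = B x y - b y := rfl
      have := this y hy
      linarith [h4 ▸ this]
    have h5 : vP ≤ c x := hvP ▸ csInf_le hbdB ⟨x, hxFP, rfl⟩
    have h6 : c x - vP < 0 := hxeq2 ▸ ht
    linarith
  obtain ⟨f, u, hf1, hf2⟩ := geometric_hahn_banach_open hSBconv hSBopen hSAconv hdisj
  set lam : ℝ := f (0, 1) with hlam
  set g : (F →L[ℝ] ℝ) →L[ℝ] ℝ := f.comp (ContinuousLinearMap.inl ℝ (F →L[ℝ] ℝ) ℝ) with hgdef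
  have hsplit : ∀ (z : F →L[ℝ] ℝ) (t : ℝ), f (z, t) = g z + t * lam := by
    intro z t
    have h1 : (z, t) = (z, 0) + t • ((0 : F →L[ℝ] ℝ), (1:ℝ)) := by
      simp [Prod.ext_iff]
    rw [h1, map_add, map_smul]
    simp [hgdef, smul_eq_mul, hlam]
  obtain ⟨y, hy⟩ := hFrefl g
  have hgy : ∀ z : F →L[ℝ] ℝ, g z = z y := fun z => by rw [← hy]; exact NormedSpace.dual_def ℝ F y z
  have hB1 : ∀ z ∈ interior Qs, ∀ t : ℝ, t < 0 → z y + t * lam < u := by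
    intro z hz t ht
    have := hf1 (z, t) ⟨hz, ht⟩
    rwa [hsplit, hgy] at this
  have hB2 : ∀ x ∈ P, u ≤ (B x - b) y + (c x - vP) * lam := by
    intro x hx
    have hmem : (B x - b, c x - vP) ∈ SA := ⟨x, hx, rfl⟩
    have := hf2 _ hmem
    rwa [hsplit, hgy] at this
  have hSAxb : ((B xb - b : F →L[ℝ] ℝ), c xb - vP) ∈ SA := ⟨xb, hxbP, rfl⟩
  have hQsmem : ∀ w : F →L[ℝ] ℝ, (∀ y' ∈ Q, 0 ≤ w y') → w ∈ Qs := fun w h => h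
  clear_value lam g z0 SA SB Qs
  clear hf1 hf2
  have hlam0 : 0 ≤ lam := by
    by_contra hcon
    push_neg at hcon
    have h1 := hB1 z0 hz0int (-1) (by norm_num)
    have h2 : 0 < u - z0 y := by linarith
    have h3 := hB1 z0 hz0int ((u - z0 y)/lam) (div_neg_of_pos_of_neg h2 hcon)
    rw [div_mul_cancel₀ _ (ne_of_lt hcon)] at h3
    linarith
  have hu0 : 0 ≤ u := by
    by_contra hcon
    push_neg at hcon
    have key : ∀ s : ℝ, 0 < s → s * (z0 y - lam) < u := by
      intro s hs
      have := hB1 (s • z0) (hint1 s hs) (-s) (by linarith)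
      simp only [ContinuousLinearMap.smul_apply, smul_eq_mul] at this
      have e : s * (z0 y - lam) = s * z0 y + (-s) * lam := by ring
      linarith
    have h1 := key 1 one_pos
    rw [one_mul] at h1
    have hneg : z0 y - lam < 0 := by linarith
    have h2 := key (u / (z0 y - lam)) (div_pos_of_neg_of_neg hcon hneg)
    rw [div_mul_cancel₀ _ (ne_of_lt hneg)] at h2
    exact lt_irrefl u h2
  have hQsy : ∀ z ∈ Qs, z y ≤ 0 := by
    intro z hz
    by_contra hcon
    push_neg at hcon
    have key : ∀ r : ℝ, 0 ≤ r → r * z y < u + lam - z0 y := by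
      intro r hr
      have := hB1 (z0 + r • z) (hint2 z hz r hr) (-1) (by norm_num)
      simp only [ContinuousLinearMap.add_apply, ContinuousLinearMap.smul_apply,
        smul_eq_mul] at this
      linarith
    have h0 := key 0 le_rfl
    rw [zero_mul] at h0
    have h2 := key ((u + lam - z0 y) / z y) (le_of_lt (div_pos h0 hcon))
    rw [div_mul_cancel₀ _ (ne_of_gt hcon)] at h2
    exact lt_irrefl _ h2
  have hyQ : -y ∈ Q := by
    by_contra hny
    obtain ⟨f', u', hf'1, hf'2⟩ := geometric_hahn_banach_closed_point hQconv hQclosed hny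
    have hu' : 0 < u' := by simpa using hf'1 0 h0Q
    have hf'le : ∀ q ∈ Q, f' q ≤ 0 := by
      intro q hq
      by_contra hfq
      push_neg at hfq
      have hmem := hQcone (u' / f' q) (le_of_lt (div_pos hu' hfq)) q hq
      have := hf'1 _ hmem
      rw [map_smul, smul_eq_mul, div_mul_cancel₀ _ (ne_of_gt hfq)] at this
      exact lt_irrefl _ this
    have hneg : (-f') y ≤ 0 := hQsy (-f') (hQsmem (-f') (fun q hq => by
      simp only [ContinuousLinearMap.neg_apply]
      linarith [hf'le q hq]))
    rw [ContinuousLinearMap.neg_apply] at hneg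
    rw [map_neg] at hf'2
    linarith
  have hlampos : 0 < lam := by
    rcases hlam0.lt_or_eq with h | h
    · exact h
    · exfalso
      by_cases hy0 : y = 0
      · have hfz : ∀ (z : F →L[ℝ] ℝ) (t : ℝ), f (z, t) = 0 := by
          intro z t
          rw [hsplit, hgy, hy0, ← h]
          simp
        have hpos := hB1 z0 hz0int (-1) (by norm_num)
        have hneg := hB2 xb hxbP
        rw [← h] at hpos hneg
        have h5 : (B xb - b) y = z0 y := by rw [hz0def]
        rw [h5] at hneg
        have hy' : z0 y = 0 := by rw [hy0]; simp
        rw [hy'] at hpos hneg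
        simp at hpos hneg
        linarith
      · have h1 := hB2 xb hxbP
        rw [← h, mul_zero, add_zero] at h1
        have h2 := hz0 (-y) hyQ
        have h3 : 0 < ‖y‖ := norm_pos_iff.2 hy0
        rw [map_neg, norm_neg] at h2
        have h4 : 0 < ε * ‖y‖ := mul_pos hε h3
        have h5 : z0 y = (B xb - b) y := by rw [hz0def]
        linarith
  set ystar : F := lam⁻¹ • (-y) with hysdef
  have hysQ : ystar ∈ Q := hQcone _ (inv_nonneg.2 hlampos.le) _ hyQ
  have hyeq : ∀ z : F →L[ℝ] ℝ, z y = -(lam * z ystar) := by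
    intro z
    rw [hysdef, map_smul, map_neg, smul_eq_mul]
    field_simp
  clear_value ystar
  have hkey : ∀ x ∈ P, vP - b ystar ≤ c x - B x ystar := by
    intro x hx
    have h1 := hB2 x hx
    rw [hyeq (B x - b)] at h1
    have h2 : (B x - b) ystar = B x ystar - b ystar := rfl
    rw [h2] at h1
    have e : -(lam * (B x ystar - b ystar)) + (c x - vP) * lam
        = lam * ((c x - vP) - (B x ystar - b ystar)) := by ring
    have hprod : 0 ≤ lam * ((c x - vP) - (B x ystar - b ystar)) := by linarith
    by_contra hcon
    push_neg at hcon
    have : lam * ((c x - vP) - (B x ystar - b ystar)) < 0 :=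
      mul_neg_of_pos_of_neg hlampos (by linarith)
    linarith
  have hfeas : ∀ x ∈ P, B x ystar ≤ c x := by
    intro x hx
    by_contra hcon
    push_neg at hcon
    have hM := hkey 0 h0P
    simp only [map_zero, ContinuousLinearMap.zero_apply, sub_zero] at hM
    have hqneg : c x - B x ystar < 0 := by linarith
    have hr : 0 ≤ (vP - b ystar - 1) / (c x - B x ystar) :=
      by rw [div_nonneg_iff]; right; exact ⟨by linarith, by linarith⟩
    have h2 := hkey (((vP - b ystar - 1) / (c x - B x ystar)) • x) (hPcone _ hr x hx)
    rw [map_smul, map_smul] at h2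
    simp only [ContinuousLinearMap.smul_apply, smul_eq_mul] at h2
    have h3 : (vP - b ystar - 1) / (c x - B x ystar) * c x -
        (vP - b ystar - 1) / (c x - B x ystar) * B x ystar = vP - b ystar - 1 := by
      rw [← mul_sub, div_mul_cancel₀ _ (ne_of_lt hqneg)]
    linarith
  have hbge : vP ≤ b ystar := by
    have := hkey 0 h0P
    simp only [map_zero, ContinuousLinearMap.zero_apply, sub_zero] at this
    linarith
  have hysFD : ystar ∈ FD := by rw [hFD]; exact ⟨hysQ, hfeas⟩
  have hyle : b ystar ≤ vD := hvD ▸ le_csSup hbdA ⟨ystar, hysFD, rfl⟩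
  have hPD : vP = vD := le_antisymm (hbge.trans hyle) hDleP
  have hbeq : b ystar = vD := le_antisymm hyle (hPD ▸ hbge)
  refine ⟨hPD, ⟨ystar, by rw [hSol]; exact ⟨hysFD, hbeq⟩⟩, ?_, ?_⟩
  · rw [hSol, hFD]
    rintro y1 ⟨⟨h1Q, h1f⟩, h1b⟩ y2 ⟨⟨h2Q, h2f⟩, h2b⟩ s t hs ht hst
    refine ⟨⟨hQconv h1Q h2Q hs ht hst, fun x hx => ?_⟩, ?_⟩
    · have ha := mul_le_mul_of_nonneg_left (h1f x hx) hs
      have hb' := mul_le_mul_of_nonneg_left (h2f x hx) ht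
      have hcx : s * c x + t * c x = c x := by rw [← add_mul, hst, one_mul]
      simp only [map_add, map_smul, smul_eq_mul]
      linarith
    · simp only [map_add, map_smul, smul_eq_mul, h1b, h2b]
      rw [← add_mul, hst, one_mul]
  · rw [hSol, hFD]
    apply (Metric.isBounded_closedBall (x := (0:F)) (r := (c xb - vD)/ε)).subset
    rintro y' ⟨⟨hy'Q, hy'f⟩, hy'b⟩
    rw [Metric.mem_closedBall, dist_zero_right]
    have h1 := hstrict y' hy'Q
    have h2 := hy'f xb hxbP
    rw [le_div_iff₀ hε, mul_comm]
    linarith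
end core

lemma real_sInf_neg (s : Set ℝ) : sInf (Neg.neg '' s) = -sSup s := by
  rw [Set.image_neg_eq_neg, Real.sInf_def, neg_neg]

lemma real_sSup_neg (s : Set ℝ) : sSup (Neg.neg '' s) = -sInf s := by
  rw [Set.image_neg_eq_neg]
  have := Real.sInf_def s
  linarith




/-- Theorem 4.1(i): if {(P),(D)} is consistent and the game
G = (α,β,A) has value v ≠ 0, then at least one of (P),(D) is strictly feasible;
in fact val(P) = val(D) and at least one of S(P), S(D) is nonempty, convex and bounded. -/
theorem stmt8
    {X Y : Type*} [NormedAddCommGroup X] [NormedSpace ℝ X] [CompleteSpace X]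
    [NormedAddCommGroup Y] [NormedSpace ℝ Y] [CompleteSpace Y]
    -- reflexivity of X and Y
    (hXrefl : Function.Surjective (NormedSpace.inclusionInDoubleDual ℝ X))
    (hYrefl : Function.Surjective (NormedSpace.inclusionInDoubleDual ℝ Y))
    (A : X →L[ℝ] (Y →L[ℝ] ℝ))
    -- closed convex cones C, K with solid dual cones
    (C : Set X) (K : Set Y)
    (hCcone : ∀ (r : ℝ), 0 ≤ r → ∀ x ∈ C, r • x ∈ C) (hCconv : Convex ℝ C)
    (hCclosed : IsClosed C)
    (hKcone : ∀ (r : ℝ), 0 ≤ r → ∀ y ∈ K, r • y ∈ K) (hKconv : Convex ℝ K)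
    (hKclosed : IsClosed K)
    (Cstar : Set (X →L[ℝ] ℝ)) (hCstar : Cstar = {w : X →L[ℝ] ℝ | ∀ x ∈ C, 0 ≤ w x})
    (Kstar : Set (Y →L[ℝ] ℝ)) (hKstar : Kstar = {z : Y →L[ℝ] ℝ | ∀ y ∈ K, 0 ≤ z y})
    -- data of the programs and consistency
    (c : X →L[ℝ] ℝ) (b : Y →L[ℝ] ℝ)
    (FeasP : Set X) (hFeasP : FeasP = {x | x ∈ C ∧ A x - b ∈ Kstar})
    (FeasD : Set Y) (hFeasD : FeasD = {y | y ∈ K ∧ -(A.flip y) + c ∈ Cstar})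
    (hPne : FeasP.Nonempty) (hDne : FeasD.Nonempty)
    (valP valD : ℝ)
    (hvalP : valP = sInf ((fun x => c x) '' FeasP))
    (hvalD : valD = sSup ((fun y => b y) '' FeasD))
    (SolP : Set X) (hSolP : SolP = {x ∈ FeasP | c x = valP})
    (SolD : Set Y) (hSolD : SolD = {y ∈ FeasD | b y = valD})
    -- the game G = (α,β,A) with α ∈ int C*, β ∈ int K*
    (α : X →L[ℝ] ℝ) (hα : α ∈ interior Cstar)
    (β : Y →L[ℝ] ℝ) (hβ : β ∈ interior Kstar)
    (S : Set X) (hS : S = {x ∈ C | α x = 1})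
    (T : Set Y) (hT : T = {y ∈ K | β y = 1})
    -- finite security levels (F3)
    (hSne : S.Nonempty) (hTne : T.Nonempty)
    (hbb : ∀ x ∈ S, BddBelow ((fun y => A x y) '' T))
    (hba : BddAbove ((fun x => sInf ((fun y => A x y) '' T)) '' S))
    (hba' : ∀ y ∈ T, BddAbove ((fun x => A x y) '' S))
    (hbb' : BddBelow ((fun y => sSup ((fun x => A x y) '' S)) '' T))
    -- v is the value of the game
    (v : ℝ)
    (hv : v = sSup ((fun x => sInf ((fun y => A x y) '' T)) '' S))
    (hv' : v = sInf ((fun y => sSup ((fun x => A x y) '' S)) '' T))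
    -- hypothesis of part (i): v ≠ 0
    (hvne : v ≠ 0) :
    -- at least one of (P), (D) is strictly feasible
    ((∃ x ∈ C, A x - b ∈ interior Kstar) ∨ (∃ y ∈ K, -(A.flip y) + c ∈ interior Cstar)) ∧
    -- val(P) = val(D)
    valP = valD ∧
    -- at least one of S(P), S(D) is nonempty, convex and bounded
    ((SolP.Nonempty ∧ Convex ℝ SolP ∧ Bornology.IsBounded SolP) ∨
     (SolD.Nonempty ∧ Convex ℝ SolD ∧ Bornology.IsBounded SolD)) := by
  -- pairing forms of the feasible sets
  have hFP' : FeasP = {x ∈ C | ∀ y ∈ K, b y ≤ A x y} := by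
    rw [hFeasP, hKstar]
    ext x
    simp only [Set.mem_setOf_eq, Set.mem_sep_iff]
    constructor
    · rintro ⟨h1, h2⟩
      refine ⟨h1, fun y hy => ?_⟩
      have := h2 y hy
      rw [ContinuousLinearMap.sub_apply] at this
      linarith
    · rintro ⟨h1, h2⟩
      refine ⟨h1, fun y hy => ?_⟩
      rw [ContinuousLinearMap.sub_apply]
      linarith [h2 y hy]
  have hFD' : FeasD = {y ∈ K | ∀ x ∈ C, A x y ≤ c x} := by
    rw [hFeasD, hCstar]
    ext y
    simp only [Set.mem_setOf_eq, Set.mem_sep_iff]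
    constructor
    · rintro ⟨h1, h2⟩
      refine ⟨h1, fun x hx => ?_⟩
      have := h2 x hx
      rw [ContinuousLinearMap.add_apply, ContinuousLinearMap.neg_apply,
        ContinuousLinearMap.flip_apply] at this
      linarith
    · rintro ⟨h1, h2⟩
      refine ⟨h1, fun x hx => ?_⟩
      rw [ContinuousLinearMap.add_apply, ContinuousLinearMap.neg_apply,
        ContinuousLinearMap.flip_apply]
      linarith [h2 x hx]
  rcases lt_or_gt_of_ne hvne with hvneg | hvpos
  · -- v < 0 : the dual is strictly feasible
    obtain ⟨εα, hεα, hαb⟩ := interior_dual_bound (hCstar ▸ hα)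
    -- find y₀ ∈ T with sup over S < v/2
    have him : ((fun y => sSup ((fun x => A x y) '' S)) '' T).Nonempty := hTne.image _
    obtain ⟨a, ⟨y₀, hy₀T, rfl⟩, ha⟩ :=
      exists_lt_of_csInf_lt him (show sInf _ < v/2 by rw [← hv']; linarith)
    have hy₀K : y₀ ∈ K := by rw [hT] at hy₀T; exact hy₀T.1
    have hy₀S : ∀ x ∈ S, A x y₀ < v/2 := fun x hx =>
      lt_of_le_of_lt (le_csSup (hba' y₀ hy₀T) ⟨x, hx, rfl⟩) ha
    -- A x y₀ ≤ (v/2) * εα * ‖x‖ for all x ∈ C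
    have hbound : ∀ x ∈ C, A x y₀ ≤ v/2 * (εα * ‖x‖) := by
      intro x hx
      rcases eq_or_ne x 0 with rfl | hx0
      · simp
      · have hαx : εα * ‖x‖ ≤ α x := hαb x hx
        have hαpos : 0 < α x := lt_of_lt_of_le (mul_pos hεα (norm_pos_iff.2 hx0)) hαx
        have hxS : (α x)⁻¹ • x ∈ S := by
          rw [hS]
          refine ⟨hCcone _ (inv_nonneg.2 hαpos.le) x hx, ?_⟩
          rw [map_smul, smul_eq_mul, inv_mul_cancel₀ hαpos.ne']
        have h1 := hy₀S _ hxS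
        rw [map_smul] at h1
        simp only [ContinuousLinearMap.smul_apply, smul_eq_mul] at h1
        -- (α x)⁻¹ * A x y₀ < v/2 ⇒ A x y₀ < v/2 * α x ≤ v/2 * (εα ‖x‖)
        have h2 : A x y₀ < v/2 * α x := by
          have := mul_lt_mul_of_pos_left h1 hαpos
          rwa [← mul_assoc, mul_inv_cancel₀ hαpos.ne', one_mul, mul_comm (α x)] at this
        have h3 : v/2 * α x ≤ v/2 * (εα * ‖x‖) :=
          mul_le_mul_of_nonpos_left hαx (by linarith)
        linarith
    set δ : ℝ := -(v/2) * εα with hδdef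
    have hδpos : 0 < δ := by
      rw [hδdef]; apply mul_pos (by linarith) hεα
    set tt : ℝ := (‖c‖ + 1)/δ with httdef
    have htt : 0 ≤ tt := le_of_lt (div_pos (by positivity) hδpos)
    set yb : Y := tt • y₀ with hybdef
    have hybK : yb ∈ K := hKcone tt htt y₀ hy₀K
    clear_value δ tt yb
    have hstrict : ∀ x ∈ C, A x yb + 1 * ‖x‖ ≤ c x := by
      intro x hx
      have h1 : A x yb = tt * A x y₀ := by rw [hybdef, map_smul, smul_eq_mul]
      have h2 : tt * A x y₀ ≤ tt * (v/2 * (εα * ‖x‖)) :=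
        mul_le_mul_of_nonneg_left (hbound x hx) htt
      have h3 : tt * (v/2 * (εα * ‖x‖)) = -((‖c‖ + 1) * ‖x‖) := by
        rw [httdef, hδdef]
        have : εα ≠ 0 := hεα.ne'
        have hv2 : (v/2) ≠ 0 := ne_of_lt (by linarith : v/2 < 0)
        field_simp
      have h4 : -(c x) ≤ ‖c‖ * ‖x‖ := by
        have h5 := c.le_opNorm x
        rw [Real.norm_eq_abs] at h5
        linarith [(abs_le.1 h5).1]
      rw [h1]
      linarith
    -- strict feasibility of the dual
    have hstrictD : -(A.flip yb) + c ∈ interior Cstar := by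
      rw [hCstar]
      apply mem_interior_of_ball one_pos
      intro x hx
      have := hstrict x hx
      rw [ContinuousLinearMap.add_apply, ContinuousLinearMap.neg_apply,
        ContinuousLinearMap.flip_apply]
      linarith
    -- apply the core duality lemma with roles of the spaces swapped
    have hcore := core_duality hXrefl (-A.flip) K C hKcone hKconv hCcone hCconv hCclosed
      (-b) (-c)
      FeasD (by rw [hFD']; ext y; simp only [Set.mem_sep_iff, ContinuousLinearMap.neg_apply,
        ContinuousLinearMap.flip_apply, neg_le_neg_iff])
      FeasP (by rw [hFP']; ext x; simp only [Set.mem_sep_iff, ContinuousLinearMap.neg_apply,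
        ContinuousLinearMap.flip_apply, neg_le_neg_iff])
      hPne yb 1 hybK one_pos
      (by intro x hx
          have := hstrict x hx
          simp only [ContinuousLinearMap.neg_apply, ContinuousLinearMap.flip_apply]
          linarith)
      (-valD) (-valP)
      (by rw [hvalD, ← real_sInf_neg]
          congr 1
          rw [← Set.image_comp]
          rfl)
      (by rw [hvalP, ← real_sSup_neg]
          congr 1
          rw [← Set.image_comp]
          rfl)
      SolP
      (by rw [hSolP]; ext x; simp only [Set.mem_setOf_eq, Set.mem_sep_iff,
            ContinuousLinearMap.neg_apply, neg_inj])
    obtain ⟨hPD, hne, hconv, hbdd⟩ := hcore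
    exact ⟨Or.inr ⟨yb, hybK, hstrictD⟩, by linarith, Or.inl ⟨hne, hconv, hbdd⟩⟩
  · -- v > 0 : the primal is strictly feasible
    obtain ⟨εβ, hεβ, hβb⟩ := interior_dual_bound (hKstar ▸ hβ)
    have him : ((fun x => sInf ((fun y => A x y) '' T)) '' S).Nonempty := hSne.image _
    obtain ⟨a, ⟨x₀, hx₀S, rfl⟩, ha⟩ :=
      exists_lt_of_lt_csSup him (show v/2 < sSup _ by rw [← hv]; linarith)
    have hx₀C : x₀ ∈ C := by rw [hS] at hx₀S; exact hx₀S.1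
    have hx₀T : ∀ y ∈ T, v/2 < A x₀ y := fun y hy =>
      lt_of_lt_of_le ha (csInf_le (hbb x₀ hx₀S) ⟨y, hy, rfl⟩)
    have hbound : ∀ y ∈ K, v/2 * (εβ * ‖y‖) ≤ A x₀ y := by
      intro y hy
      rcases eq_or_ne y 0 with rfl | hy0
      · simp
      · have hβy : εβ * ‖y‖ ≤ β y := hβb y hy
        have hβpos : 0 < β y := lt_of_lt_of_le (mul_pos hεβ (norm_pos_iff.2 hy0)) hβy
        have hyT : (β y)⁻¹ • y ∈ T := by
          rw [hT]
          refine ⟨hKcone _ (inv_nonneg.2 hβpos.le) y hy, ?_⟩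
          rw [map_smul, smul_eq_mul, inv_mul_cancel₀ hβpos.ne']
        have h1 := hx₀T _ hyT
        rw [map_smul] at h1
        simp only [smul_eq_mul] at h1
        have h2 : v/2 * β y ≤ A x₀ y := by
          have := mul_le_mul_of_nonneg_left h1.le hβpos.le
          rwa [← mul_assoc, mul_inv_cancel₀ hβpos.ne', one_mul, mul_comm (β y)] at this
        have h3 : v/2 * (εβ * ‖y‖) ≤ v/2 * β y :=
          mul_le_mul_of_nonneg_left hβy (by linarith)
        linarith
    set δ : ℝ := v/2 * εβ with hδdef
    have hδpos : 0 < δ := by rw [hδdef]; apply mul_pos (by linarith) hεβ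
    set tt : ℝ := (‖b‖ + 1)/δ with httdef
    have htt : 0 ≤ tt := le_of_lt (div_pos (by positivity) hδpos)
    set xb : X := tt • x₀ with hxbdef
    have hxbC : xb ∈ C := hCcone tt htt x₀ hx₀C
    clear_value δ tt xb
    have hstrict : ∀ y ∈ K, b y + 1 * ‖y‖ ≤ A xb y := by
      intro y hy
      have h1 : A xb y = tt * A x₀ y := by
        rw [hxbdef, map_smul]
        simp only [ContinuousLinearMap.smul_apply, smul_eq_mul]
      have h2 : tt * (v/2 * (εβ * ‖y‖)) ≤ tt * A x₀ y :=
        mul_le_mul_of_nonneg_left (hbound y hy) htt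
      have h3 : tt * (v/2 * (εβ * ‖y‖)) = (‖b‖ + 1) * ‖y‖ := by
        rw [httdef, hδdef]
        have hv2 : (v/2) ≠ 0 := ne_of_gt (by linarith : (0:ℝ) < v/2)
        field_simp
      have h4 : b y ≤ ‖b‖ * ‖y‖ := by
        have h5 := b.le_opNorm y
        rw [Real.norm_eq_abs] at h5
        linarith [(abs_le.1 h5).1, le_abs_self (b y)]
      rw [h1]
      linarith
    have hstrictP : A xb - b ∈ interior Kstar := by
      rw [hKstar]
      apply mem_interior_of_ball one_pos
      intro y hy
      have := hstrict y hy
      rw [ContinuousLinearMap.sub_apply]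
      linarith
    have hcore := core_duality hYrefl A C K hCcone hCconv hKcone hKconv hKclosed
      c b
      FeasP (by rw [hFP'])
      FeasD (by rw [hFD'])
      hDne xb 1 hxbC one_pos hstrict
      valP valD
      (by rw [hvalP])
      (by rw [hvalD])
      SolD (by rw [hSolD])
    obtain ⟨hPD, hne, hconv, hbdd⟩ := hcore
    exact ⟨Or.inl ⟨xb, hxbC, hstrictP⟩, hPD, Or.inr ⟨hne, hconv, hbdd⟩⟩
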